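/- Let L_d^E(q, q̄) = ∫_0^h L(q_E(t), q̇_E(t)) dt be the exact discrete Lagrangian, where q_E is the solution of M(q)q̇ = ∇H(q) with q_E(0) = q (so q̄ = q_E(h)), and let L_d(q, q̄) = h·L((q+q̄)/2, (q̄−q)/h) be the midpoint-rule discrete Lagrangian. Then the midpoint rule is of order 2: for every open set U ⊂ ℝ^n with compact closure there exist constants C > 0 and h̄ > 0 such that |L_d(q(0), q(h)) − L_d^E(q(0), q(h))| ≤ C h³ for every solution q(t) of M(q)q̇ = ∇H(q) with q(0) ∈ U and every 0 < h ≤ h̄. -/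

import Mathlib

set_option maxHeartbeats 2000000

open Matrix Set

section Helpers

variable {E : Type*} [NormedAddCommGroup E] [NormedSpace ℝ E]

lemma my_taylor1_right {f f1 : ℝ → E} (hf : ∀ t, HasDerivAt f (f1 t) t)
    {a b K : ℝ} (hab : a ≤ b) (hK : ∀ t ∈ Icc a b, ‖f1 t‖ ≤ K) :
    ‖f b - f a‖ ≤ K * (b - a) :=
  norm_image_sub_le_of_norm_deriv_le_segment'
    (fun x _ => (hf x).hasDerivWithinAt)
    (fun x hx => hK x (Ico_subset_Icc_self hx)) b (right_mem_Icc.2 hab)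

lemma my_taylor2_right {f f1 f2 : ℝ → E} (hf : ∀ t, HasDerivAt f (f1 t) t)
    (hf1 : ∀ t, HasDerivAt f1 (f2 t) t)
    {a b K : ℝ} (hab : a ≤ b) (hK : ∀ t ∈ Icc a b, ‖f2 t‖ ≤ K) :
    ‖f b - f a - (b - a) • f1 a‖ ≤ K * (b - a) ^ 2 / 2 := by
  set g : ℝ → E := fun t => f t - f a - (t - a) • f1 a with hg
  have hg' : ∀ t, HasDerivAt g (f1 t - f1 a) t := by
    intro t
    have h1 : HasDerivAt (fun t : ℝ => (t - a) • f1 a) ((1:ℝ) • f1 a) t :=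
      ((hasDerivAt_id t).sub_const a).smul_const (f1 a)
    have := ((hf t).sub_const (f a)).sub h1
    rw [one_smul] at this
    exact this
  have key : ∀ x ∈ Icc a b, ‖g x‖ ≤ K * (x - a) ^ 2 / 2 := by
    have hB : ∀ x : ℝ, HasDerivAt (fun t => K * (t - a) ^ 2 / 2) (K * (x - a)) x := by
      intro x
      have : HasDerivAt (fun t : ℝ => K * (t - a) ^ 2 / 2)
          (K * (2 * (x - a) ^ 1 * 1) / 2) x :=
        ((((hasDerivAt_id x).sub_const a).pow 2).const_mul K).div_const 2
      convert this using 1; ring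
    refine image_norm_le_of_norm_deriv_right_le_deriv_boundary
      (fun x _ => ((hg' x).continuousAt).continuousWithinAt)
      (fun x _ => (hg' x).hasDerivWithinAt) ?_ hB ?_
    · simp [hg]
    · intro x hx
      have := my_taylor1_right hf1 hx.1 (fun t ht => hK t ⟨ht.1, le_trans ht.2 hx.2.le⟩)
      simpa using this
  simpa [hg] using key b (right_mem_Icc.2 hab)

lemma my_taylor3_right {f f1 f2 f3 : ℝ → E} (hf : ∀ t, HasDerivAt f (f1 t) t)
    (hf1 : ∀ t, HasDerivAt f1 (f2 t) t) (hf2 : ∀ t, HasDerivAt f2 (f3 t) t)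
    {a b K : ℝ} (hab : a ≤ b) (hK : ∀ t ∈ Icc a b, ‖f3 t‖ ≤ K) :
    ‖f b - f a - (b - a) • f1 a - ((b - a) ^ 2 / 2) • f2 a‖ ≤ K * (b - a) ^ 3 / 6 := by
  set g : ℝ → E := fun t => f t - f a - (t - a) • f1 a - ((t - a) ^ 2 / 2) • f2 a with hg
  have hg' : ∀ t, HasDerivAt g (f1 t - f1 a - (t - a) • f2 a) t := by
    intro t
    have h1 : HasDerivAt (fun t : ℝ => (t - a) • f1 a) ((1:ℝ) • f1 a) t :=
      ((hasDerivAt_id t).sub_const a).smul_const (f1 a)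
    have h2 : HasDerivAt (fun t : ℝ => ((t - a) ^ 2 / 2) • f2 a)
        ((2 * (t - a) ^ 1 * 1 / 2) • f2 a) t :=
      ((((hasDerivAt_id t).sub_const a).pow 2).div_const 2).smul_const (f2 a)
    have := (((hf t).sub_const (f a)).sub h1).sub h2
    have h3 : (2 * (t - a) ^ 1 * 1 / 2 : ℝ) = t - a := by ring
    rw [h3, one_smul] at this
    exact this
  have key : ∀ x ∈ Icc a b, ‖g x‖ ≤ K * (x - a) ^ 3 / 6 := by
    have hB : ∀ x : ℝ, HasDerivAt (fun t => K * (t - a) ^ 3 / 6) (K * (x - a) ^ 2 / 2) x := by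
      intro x
      have : HasDerivAt (fun t : ℝ => K * (t - a) ^ 3 / 6)
          (K * (3 * (x - a) ^ 2 * 1) / 6) x :=
        ((((hasDerivAt_id x).sub_const a).pow 3).const_mul K).div_const 6
      convert this using 1; ring
    refine image_norm_le_of_norm_deriv_right_le_deriv_boundary
      (fun x _ => ((hg' x).continuousAt).continuousWithinAt)
      (fun x _ => (hg' x).hasDerivWithinAt) ?_ hB ?_
    · simp [hg]
    · intro x hx
      exact my_taylor2_right hf1 hf2 hx.1 (fun t ht => hK t ⟨ht.1, le_trans ht.2 hx.2.le⟩)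
  simpa [hg] using key b (right_mem_Icc.2 hab)

lemma my_refl_deriv {f f1 : ℝ → E} (hf : ∀ t, HasDerivAt f (f1 t) t) (a : ℝ) :
    ∀ t, HasDerivAt (fun s => f (2 * a - s)) ((-1 : ℝ) • f1 (2 * a - t)) t := by
  intro t
  exact (hf (2 * a - t)).scomp t (by simpa using (hasDerivAt_id t).const_sub (2 * a))

lemma my_taylor2 {f f1 f2 : ℝ → E} (hf : ∀ t, HasDerivAt f (f1 t) t)
    (hf1 : ∀ t, HasDerivAt f1 (f2 t) t)
    {a b K : ℝ} (hK : ∀ t ∈ uIcc a b, ‖f2 t‖ ≤ K) :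
    ‖f b - f a - (b - a) • f1 a‖ ≤ K * |b - a| ^ 2 / 2 := by
  rcases le_total a b with hab | hba
  · rw [abs_of_nonneg (by linarith)]
    exact my_taylor2_right hf hf1 hab (by rwa [uIcc_of_le hab] at hK)
  · set F : ℝ → E := fun s => f (2 * a - s) with hF
    set F1 : ℝ → E := fun s => (-1 : ℝ) • f1 (2 * a - s) with hF1
    set F2 : ℝ → E := fun s => f2 (2 * a - s) with hF2
    have hFd : ∀ t, HasDerivAt F (F1 t) t := my_refl_deriv hf a
    have hF1d : ∀ t, HasDerivAt F1 (F2 t) t := by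
      intro t
      have := (my_refl_deriv hf1 a t).const_smul (-1 : ℝ)
      simpa [hF1, hF2, Pi.neg_def] using this
    have hab' : a ≤ 2 * a - b := by linarith
    have hKK : ∀ t ∈ Icc a (2 * a - b), ‖F2 t‖ ≤ K := by
      intro t ht
      refine hK (2 * a - t) ?_
      rw [uIcc_of_ge hba]
      exact ⟨by linarith [ht.2], by linarith [ht.1]⟩
    have := my_taylor2_right hFd hF1d hab' hKK
    have e1 : F (2 * a - b) = f b := by simp [hF]
    have e2 : F a = f a := by norm_num [hF]; ring_nf
    have e3 : F1 a = (-1 : ℝ) • f1 a := by norm_num [hF1]; ring_nf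
    rw [e1, e2, e3] at this
    have e4 : (2 * a - b - a) • ((-1 : ℝ) • f1 a) = (b - a) • f1 a := by
      rw [smul_smul]; congr 1; ring
    rw [e4] at this
    calc ‖f b - f a - (b - a) • f1 a‖ ≤ K * (2 * a - b - a) ^ 2 / 2 := this
      _ = K * |b - a| ^ 2 / 2 := by rw [sq_abs]; ring_nf

lemma my_taylor3 {f f1 f2 f3 : ℝ → E} (hf : ∀ t, HasDerivAt f (f1 t) t)
    (hf1 : ∀ t, HasDerivAt f1 (f2 t) t) (hf2 : ∀ t, HasDerivAt f2 (f3 t) t)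
    {a b K : ℝ} (hK : ∀ t ∈ uIcc a b, ‖f3 t‖ ≤ K) :
    ‖f b - f a - (b - a) • f1 a - ((b - a) ^ 2 / 2) • f2 a‖ ≤ K * |b - a| ^ 3 / 6 := by
  rcases le_total a b with hab | hba
  · rw [abs_of_nonneg (by linarith)]
    exact my_taylor3_right hf hf1 hf2 hab (by rwa [uIcc_of_le hab] at hK)
  · set F : ℝ → E := fun s => f (2 * a - s) with hF
    set F1 : ℝ → E := fun s => (-1 : ℝ) • f1 (2 * a - s) with hF1
    set F2 : ℝ → E := fun s => f2 (2 * a - s) with hF2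
    set F3 : ℝ → E := fun s => (-1 : ℝ) • f3 (2 * a - s) with hF3
    have hFd : ∀ t, HasDerivAt F (F1 t) t := my_refl_deriv hf a
    have hF1d : ∀ t, HasDerivAt F1 (F2 t) t := by
      intro t
      have := (my_refl_deriv hf1 a t).const_smul (-1 : ℝ)
      simpa [hF1, hF2, Pi.neg_def] using this
    have hF2d : ∀ t, HasDerivAt F2 (F3 t) t := my_refl_deriv hf2 a
    have hab' : a ≤ 2 * a - b := by linarith
    have hKK : ∀ t ∈ Icc a (2 * a - b), ‖F3 t‖ ≤ K := by
      intro t ht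
      have : ‖f3 (2 * a - t)‖ ≤ K := by
        refine hK (2 * a - t) ?_
        rw [uIcc_of_ge hba]
        exact ⟨by linarith [ht.2], by linarith [ht.1]⟩
      simpa [hF3] using this
    have := my_taylor3_right hFd hF1d hF2d hab' hKK
    have e1 : F (2 * a - b) = f b := by simp [hF]
    have e2 : F a = f a := by norm_num [hF]; ring_nf
    have e3 : F1 a = (-1 : ℝ) • f1 a := by norm_num [hF1]; ring_nf
    have e5 : F2 a = f2 a := by norm_num [hF2]; ring_nf
    rw [e1, e2, e3, e5] at this
    have e4 : (2 * a - b - a) • ((-1 : ℝ) • f1 a) = (b - a) • f1 a := by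
      rw [smul_smul]; congr 1; ring
    have e6 : ((2 * a - b - a) ^ 2 / 2) • f2 a = ((b - a) ^ 2 / 2) • f2 a := by
      congr 1; ring
    rw [e4, e6] at this
    calc ‖f b - f a - (b - a) • f1 a - ((b - a) ^ 2 / 2) • f2 a‖
        ≤ K * (2 * a - b - a) ^ 3 / 6 := this
      _ = K * |b - a| ^ 3 / 6 := by
          have : (2 * a - b - a) ^ 3 = |b - a| ^ 3 := by
            rw [show |b - a| = -(b - a) from abs_of_nonpos (by linarith)]; ring
          rw [this]

variable {P F : Type*} [NormedAddCommGroup P] [NormedSpace ℝ P]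
  [NormedAddCommGroup F] [NormedSpace ℝ F]

noncomputable def myDt (G : ℝ × P → F) : ℝ × P → F :=
  fun p => fderiv ℝ G p (1, 0)

lemma myDt_contDiff {G : ℝ × P → F} (hG : ContDiff ℝ (⊤ : ℕ∞) G) :
    ContDiff ℝ (⊤ : ℕ∞) (myDt G) := by
  have h1 : ContDiff ℝ (⊤ : ℕ∞) (fderiv ℝ G) := hG.fderiv_right (by exact_mod_cast le_top)
  exact (ContinuousLinearMap.apply ℝ F ((1:ℝ), (0:P))).contDiff.comp h1

lemma myDt_hasDerivAt {G : ℝ × P → F} (hG : ContDiff ℝ (⊤ : ℕ∞) G) (t : ℝ) (q : P) :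
    HasDerivAt (fun s => G (s, q)) (myDt G (t, q)) t := by
  have h1 : HasFDerivAt G (fderiv ℝ G (t, q)) (t, q) :=
    (hG.differentiable (by simp) (t, q)).hasFDerivAt
  have h2 : HasDerivAt (fun s : ℝ => (s, q)) ((1:ℝ), (0:P)) t :=
    (hasDerivAt_id t).prodMk (hasDerivAt_const t q)
  simpa [myDt, Function.comp_def] using (h1.comp_hasDerivAt t h2)

lemma myDot_bound {n : ℕ} (a b : Fin n → ℝ) : |a ⬝ᵥ b| ≤ n * (‖a‖ * ‖b‖) := by
  calc |a ⬝ᵥ b| ≤ ∑ i, |a i * b i| := Finset.abs_sum_le_sum_abs _ _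
    _ ≤ ∑ _i : Fin n, ‖a‖ * ‖b‖ := by
        refine Finset.sum_le_sum fun i _ => ?_
        rw [abs_mul]
        exact mul_le_mul (norm_le_pi_norm a i) (norm_le_pi_norm b i)
          (abs_nonneg _) (norm_nonneg _)
    _ = n * (‖a‖ * ‖b‖) := by simp [Finset.sum_const, nsmul_eq_mul]

end Helpers
/-- The Jacobian matrix `(Dα)_{μν} = ∂α_μ/∂q^ν` of a map `α : ℝ^n → ℝ^n`. -/
noncomputable def jac {n : ℕ} (f : (Fin n → ℝ) → (Fin n → ℝ)) (q : Fin n → ℝ) :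
    Matrix (Fin n) (Fin n) ℝ :=
  fun μ ν => fderiv ℝ f q (Pi.single ν 1) μ

/-- The gradient `∇H` of a function `H : ℝ^n → ℝ`. -/
noncomputable def grad {n : ℕ} (H : (Fin n → ℝ) → ℝ) (q : Fin n → ℝ) : Fin n → ℝ :=
  fun μ => fderiv ℝ H q (Pi.single μ 1)

/-- The antisymmetric matrix `M(q) = Dα(q)ᵀ − Dα(q)`. -/
noncomputable def Mmat {n : ℕ} (α : (Fin n → ℝ) → (Fin n → ℝ)) (q : Fin n → ℝ) :
    Matrix (Fin n) (Fin n) ℝ :=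
  (jac α q)ᵀ - jac α q

theorem midpoint_rule_is_order_two
    {n : ℕ} (hn : Even n)
    (α : (Fin n → ℝ) → (Fin n → ℝ)) (H : (Fin n → ℝ) → ℝ)
    (hα : ContDiff ℝ (⊤ : ℕ∞) α) (hH : ContDiff ℝ (⊤ : ℕ∞) H)
    (hM : ∀ q : Fin n → ℝ, IsUnit (Mmat α q).det)
    (φ : ℝ → (Fin n → ℝ) → (Fin n → ℝ))
    (hφ0 : ∀ q, φ 0 q = q)
    (hφsmooth : ContDiff ℝ (⊤ : ℕ∞) (fun p : ℝ × (Fin n → ℝ) => φ p.1 p.2))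
    (hflow : ∀ (t : ℝ) (q : Fin n → ℝ),
      HasDerivAt (fun s => φ s q) ((Mmat α (φ t q))⁻¹ *ᵥ grad H (φ t q)) t)
    (U : Set (Fin n → ℝ)) (hU : IsOpen U) (hUc : IsCompact (closure U)) :
    ∃ C > (0:ℝ), ∃ hbar > (0:ℝ), ∀ q ∈ U, ∀ h : ℝ, 0 < h → h ≤ hbar →
      |h * (α (((1:ℝ)/2) • (q + φ h q)) ⬝ᵥ (((1:ℝ)/h) • (φ h q - q))
            - H (((1:ℝ)/2) • (q + φ h q)))
        - ∫ t in (0:ℝ)..h,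
            (α (φ t q) ⬝ᵥ deriv (fun s => φ s q) t - H (φ t q))| ≤ C * h ^ 3 := by
  classical
  have hΦ : ContDiff ℝ (⊤ : ℕ∞) (fun p : ℝ × (Fin n → ℝ) => φ p.1 p.2) := hφsmooth
  set Φ : ℝ × (Fin n → ℝ) → (Fin n → ℝ) := fun p => φ p.1 p.2 with hΦdef
  set Φ₁ := myDt Φ with hΦ₁def
  have hΦ₁ : ContDiff ℝ (⊤ : ℕ∞) Φ₁ := myDt_contDiff hΦ
  set Φ₂ := myDt Φ₁ with hΦ₂def
  have hΦ₂ : ContDiff ℝ (⊤ : ℕ∞) Φ₂ := myDt_contDiff hΦ₁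
  set Φ₃ := myDt Φ₂ with hΦ₃def
  have hΦ₃ : ContDiff ℝ (⊤ : ℕ∞) Φ₃ := myDt_contDiff hΦ₂
  set G : ℝ × (Fin n → ℝ) → ℝ := fun p => α (Φ p) ⬝ᵥ Φ₁ p - H (Φ p) with hGdef
  have hG : ContDiff ℝ (⊤ : ℕ∞) G := by
    have h1 : ContDiff ℝ (⊤ : ℕ∞) (fun p => α (Φ p)) := hα.comp hΦ
    have hdot : ContDiff ℝ (⊤ : ℕ∞) (fun p => α (Φ p) ⬝ᵥ Φ₁ p) := by
      have : ContDiff ℝ (⊤ : ℕ∞) (fun p => ∑ i, α (Φ p) i * Φ₁ p i) :=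
        ContDiff.sum fun i _ =>
          ((contDiff_pi.1 h1 i).mul (contDiff_pi.1 hΦ₁ i))
      simpa [dotProduct] using this
    exact hdot.sub (hH.comp hΦ)
  set G₁ := myDt G with hG₁def
  have hG₁ : ContDiff ℝ (⊤ : ℕ∞) G₁ := myDt_contDiff hG
  set G₂ := myDt G₁ with hG₂def
  have hG₂ : ContDiff ℝ (⊤ : ℕ∞) G₂ := myDt_contDiff hG₁
  -- compact set and uniform bounds
  set T : Set (ℝ × (Fin n → ℝ)) := Icc (0:ℝ) 1 ×ˢ closure U with hTdef
  have hT : IsCompact T := isCompact_Icc.prod hUc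
  obtain ⟨R₀, hR₀⟩ := hT.exists_bound_of_continuousOn hΦ.continuous.continuousOn
  obtain ⟨K1₀, hK1₀⟩ := hT.exists_bound_of_continuousOn hΦ₁.continuous.continuousOn
  obtain ⟨K2₀, hK2₀⟩ := hT.exists_bound_of_continuousOn hΦ₂.continuous.continuousOn
  obtain ⟨K3₀, hK3₀⟩ := hT.exists_bound_of_continuousOn hΦ₃.continuous.continuousOn
  obtain ⟨Kg₀, hKg₀⟩ := hT.exists_bound_of_continuousOn hG₂.continuous.continuousOn
  set R := max R₀ 0 with hRdef
  set K1 := max K1₀ 0 with hK1def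
  set K2 := max K2₀ 0 with hK2def
  set K3 := max K3₀ 0 with hK3def
  set Kg := max Kg₀ 0 with hKgdef
  have hR0 : (0:ℝ) ≤ R := le_max_right _ _
  have hK10 : (0:ℝ) ≤ K1 := le_max_right _ _
  have hK20 : (0:ℝ) ≤ K2 := le_max_right _ _
  have hK30 : (0:ℝ) ≤ K3 := le_max_right _ _
  have hKg0 : (0:ℝ) ≤ Kg := le_max_right _ _
  -- ball V, Lipschitz constants
  set V : Set (Fin n → ℝ) := Metric.closedBall 0 R with hVdef
  have hVcomp : IsCompact V := isCompact_closedBall 0 R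
  have hVconv : Convex ℝ V := convex_closedBall 0 R
  obtain ⟨Lα₀, hLα₀⟩ := hVcomp.exists_bound_of_continuousOn
    ((hα.continuous_fderiv (by simp)).continuousOn)
  obtain ⟨LH₀, hLH₀⟩ := hVcomp.exists_bound_of_continuousOn
    ((hH.continuous_fderiv (by simp)).continuousOn)
  obtain ⟨Mα₀, hMα₀⟩ := hVcomp.exists_bound_of_continuousOn hα.continuous.continuousOn
  set Lα := max Lα₀ 0 with hLαdef
  set LH := max LH₀ 0 with hLHdef
  set Mα := max Mα₀ 0 with hMαdef
  have hLα0 : (0:ℝ) ≤ Lα := le_max_right _ _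
  have hLH0 : (0:ℝ) ≤ LH := le_max_right _ _
  have hMα0 : (0:ℝ) ≤ Mα := le_max_right _ _
  refine ⟨n * (Lα * (K2 * K1)) / 8 + n * (Mα * K3) / 24 + LH * K2 / 8 + Kg / 8 + 1,
    by positivity, 1, one_pos, ?_⟩
  intro q hq h h0 h1
  set C : ℝ := n * (Lα * (K2 * K1)) / 8 + n * (Mα * K3) / 24 + LH * K2 / 8 + Kg / 8 + 1
    with hCdef
  have hq' : q ∈ closure U := subset_closure hq
  -- pointwise bounds along the trajectory
  have bR : ∀ t ∈ Icc (0:ℝ) 1, ‖Φ (t, q)‖ ≤ R :=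
    fun t ht => le_trans (hR₀ _ ⟨ht, hq'⟩) (le_max_left _ _)
  have bK1 : ∀ t ∈ Icc (0:ℝ) 1, ‖Φ₁ (t, q)‖ ≤ K1 :=
    fun t ht => le_trans (hK1₀ _ ⟨ht, hq'⟩) (le_max_left _ _)
  have bK2 : ∀ t ∈ Icc (0:ℝ) 1, ‖Φ₂ (t, q)‖ ≤ K2 :=
    fun t ht => le_trans (hK2₀ _ ⟨ht, hq'⟩) (le_max_left _ _)
  have bK3 : ∀ t ∈ Icc (0:ℝ) 1, ‖Φ₃ (t, q)‖ ≤ K3 :=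
    fun t ht => le_trans (hK3₀ _ ⟨ht, hq'⟩) (le_max_left _ _)
  have bKg : ∀ t ∈ Icc (0:ℝ) 1, ‖G₂ (t, q)‖ ≤ Kg :=
    fun t ht => le_trans (hKg₀ _ ⟨ht, hq'⟩) (le_max_left _ _)
  -- derivatives of slices
  have hc1 : ∀ t, HasDerivAt (fun s => Φ (s, q)) (Φ₁ (t, q)) t :=
    fun t => myDt_hasDerivAt hΦ t q
  have hc2 : ∀ t, HasDerivAt (fun s => Φ₁ (s, q)) (Φ₂ (t, q)) t :=
    fun t => myDt_hasDerivAt hΦ₁ t q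
  have hc3 : ∀ t, HasDerivAt (fun s => Φ₂ (s, q)) (Φ₃ (t, q)) t :=
    fun t => myDt_hasDerivAt hΦ₂ t q
  have hgd1 : ∀ t, HasDerivAt (fun s => G (s, q)) (G₁ (t, q)) t :=
    fun t => myDt_hasDerivAt hG t q
  have hgd2 : ∀ t, HasDerivAt (fun s => G₁ (s, q)) (G₂ (t, q)) t :=
    fun t => myDt_hasDerivAt hG₁ t q
  have hΦ0q : Φ (0, q) = q := hφ0 q
  have hΦhq : Φ (h, q) = φ h q := rfl
  have hmemuIcc : ∀ b ∈ Icc (0:ℝ) 1, ∀ t ∈ uIcc (h/2) b, t ∈ Icc (0:ℝ) 1 := by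
    intro b hb t ht
    rcases mem_uIcc.1 ht with ⟨l, r⟩ | ⟨l, r⟩
    · exact ⟨by linarith, by linarith [hb.2]⟩
    · exact ⟨by linarith [hb.1], by linarith⟩
  have hh2mem : h/2 ∈ Icc (0:ℝ) 1 := ⟨by linarith, by linarith⟩
  have hhmem : h ∈ Icc (0:ℝ) 1 := ⟨by linarith, by linarith⟩
  have h0mem : (0:ℝ) ∈ Icc (0:ℝ) 1 := ⟨le_refl _, zero_le_one⟩
  -- abbreviations
  set μ := Φ (h/2, q) with hμdef
  set w := Φ₁ (h/2, q) with hwdef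
  set m := ((1:ℝ)/2) • (q + φ h q) with hmdef
  -- Estimate 1 : ‖φ h q - q‖ ≤ K1 * h
  have E1 : ‖φ h q - q‖ ≤ K1 * h := by
    have := my_taylor1_right hc1 h0.le
      (fun t ht => bK1 t ⟨ht.1, le_trans ht.2 h1⟩)
    rw [hΦ0q] at this
    simpa using this
  -- Estimate 2 : ‖m - μ‖ ≤ K2 * h^2 / 8
  have habs1 : |h - h/2| = h/2 := by rw [abs_of_nonneg (by linarith)]; ring
  have habs2 : |(0:ℝ) - h/2| = h/2 := by rw [abs_of_nonpos (by linarith)]; ring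
  have E2 : ‖m - μ‖ ≤ K2 * h^2 / 8 := by
    have A1 := my_taylor2 hc1 hc2 (a := h/2) (b := h) (K := K2)
      (fun t ht => bK2 t (hmemuIcc h hhmem t ht))
    have A2 := my_taylor2 hc1 hc2 (a := h/2) (b := 0) (K := K2)
      (fun t ht => bK2 t (hmemuIcc 0 h0mem t ht))
    rw [habs1] at A1
    rw [habs2, hΦ0q] at A2
    have hid : m - μ = ((1:ℝ)/2) •
        ((Φ (h, q) - μ - (h - h/2) • w) + (q - μ - ((0:ℝ) - h/2) • w)) := by
      rw [hmdef, hΦhq]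
      module
    rw [hid, norm_smul]
    have : ‖(Φ (h, q) - μ - (h - h/2) • w) + (q - μ - ((0:ℝ) - h/2) • w)‖
        ≤ K2 * (h/2)^2 / 2 + K2 * (h/2)^2 / 2 := le_trans (norm_add_le _ _) (by
          exact add_le_add A1 A2)
    calc ‖((1:ℝ)/2)‖ * ‖(Φ (h, q) - μ - (h - h/2) • w) + (q - μ - ((0:ℝ) - h/2) • w)‖
        ≤ (1/2) * (K2 * (h/2)^2 / 2 + K2 * (h/2)^2 / 2) := by
          rw [Real.norm_eq_abs, abs_of_nonneg (by norm_num : (0:ℝ) ≤ 1/2)]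
          exact mul_le_mul_of_nonneg_left this (by norm_num)
      _ = K2 * h^2 / 8 := by ring
  -- Estimate 3 : ‖(φ h q - q) - h • w‖ ≤ K3 * h^3 / 24
  have E3 : ‖(φ h q - q) - h • w‖ ≤ K3 * h^3 / 24 := by
    have B1 := my_taylor3 hc1 hc2 hc3 (a := h/2) (b := h) (K := K3)
      (fun t ht => bK3 t (hmemuIcc h hhmem t ht))
    have B2 := my_taylor3 hc1 hc2 hc3 (a := h/2) (b := 0) (K := K3)
      (fun t ht => bK3 t (hmemuIcc 0 h0mem t ht))
    rw [habs1] at B1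
    rw [habs2, hΦ0q] at B2
    have hid : (φ h q - q) - h • w =
        (Φ (h, q) - μ - (h - h/2) • w - (((h - h/2)^2)/2) • Φ₂ (h/2, q))
        - (q - μ - ((0:ℝ) - h/2) • w - ((((0:ℝ) - h/2)^2)/2) • Φ₂ (h/2, q)) := by
      rw [hΦhq]
      module
    rw [hid]
    calc ‖_ - _‖ ≤ K3 * (h/2)^3 / 6 + K3 * (h/2)^3 / 6 :=
          le_trans (norm_sub_le _ _) (add_le_add B1 B2)
      _ = K3 * h^3 / 24 := by ring
  -- Estimate 4 : Taylor for G
  have E4 : ∀ t ∈ Icc (0:ℝ) h,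
      ‖G (t, q) - G (h/2, q) - (t - h/2) • G₁ (h/2, q)‖ ≤ Kg * h^2 / 8 := by
    intro t ht
    have htmem : t ∈ Icc (0:ℝ) 1 := ⟨ht.1, le_trans ht.2 h1⟩
    have hsub : ∀ s ∈ uIcc (h/2) t, s ∈ Icc (0:ℝ) 1 := by
      intro s hs
      rcases mem_uIcc.1 hs with ⟨l, r⟩ | ⟨l, r⟩
      · exact ⟨by linarith [hh2mem.1], by linarith [htmem.2]⟩
      · exact ⟨by linarith [htmem.1], by linarith [hh2mem.2]⟩
    have := my_taylor2 hgd1 hgd2 (a := h/2) (b := t) (K := Kg)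
      (fun s hs => bKg s (hsub s hs))
    have habs : |t - h/2| ≤ h/2 := by
      rw [abs_le]; constructor <;> [linarith [ht.1]; linarith [ht.2]]
    calc ‖G (t, q) - G (h/2, q) - (t - h/2) • G₁ (h/2, q)‖
        ≤ Kg * |t - h/2|^2 / 2 := this
      _ ≤ Kg * (h/2)^2 / 2 := by gcongr
      _ = Kg * h^2 / 8 := by ring
  -- Integral estimate
  have hcontG : Continuous fun t => G (t, q) :=
    hG.continuous.comp (continuous_id.prodMk continuous_const)
  have hcontAff : Continuous fun t : ℝ => G (h/2, q) + (t - h/2) * G₁ (h/2, q) := by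
    fun_prop
  have hi2 : IntervalIntegrable (fun t : ℝ => (t - h/2) * G₁ (h/2, q)) MeasureTheory.volume 0 h :=
    (Continuous.intervalIntegrable (by fun_prop)) _ _
  have hi1 : IntervalIntegrable (fun _ : ℝ => G (h/2, q)) MeasureTheory.volume 0 h :=
    intervalIntegrable_const
  have hi3 : IntervalIntegrable (fun t : ℝ => t - h/2) MeasureTheory.volume 0 h :=
    (Continuous.intervalIntegrable (by fun_prop)) _ _
  have key0 : (∫ t in (0:ℝ)..h, (G (h/2, q) + (t - h/2) * G₁ (h/2, q))) = h * G (h/2, q) := by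
    rw [intervalIntegral.integral_add hi1 hi2, intervalIntegral.integral_mul_const,
      intervalIntegral.integral_const]
    have hz : (∫ t in (0:ℝ)..h, (t - h/2)) = 0 := by
      rw [intervalIntegral.integral_sub intervalIntegral.intervalIntegrable_id
        intervalIntegrable_const, integral_id,
        intervalIntegral.integral_const]
      simp [smul_eq_mul]
      ring
    rw [hz]
    simp [smul_eq_mul]
  have E5 : |(∫ t in (0:ℝ)..h, G (t, q)) - h * G (h/2, q)| ≤ Kg * h^2 / 8 * h := by
    have hsplit : (∫ t in (0:ℝ)..h, G (t, q)) - h * G (h/2, q)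
        = ∫ t in (0:ℝ)..h, (G (t, q) - (G (h/2, q) + (t - h/2) * G₁ (h/2, q))) := by
      rw [intervalIntegral.integral_sub (hcontG.intervalIntegrable _ _)
        (hcontAff.intervalIntegrable _ _), key0]
    rw [hsplit]
    have := intervalIntegral.norm_integral_le_of_norm_le_const
      (C := Kg * h^2 / 8) (a := (0:ℝ)) (b := h)
      (f := fun t => G (t, q) - (G (h/2, q) + (t - h/2) * G₁ (h/2, q))) ?_
    · rw [Real.norm_eq_abs] at this
      calc |∫ t in (0:ℝ)..h, (G (t, q) - (G (h/2, q) + (t - h/2) * G₁ (h/2, q)))|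
          ≤ Kg * h^2 / 8 * |h - 0| := this
        _ = Kg * h^2 / 8 * h := by rw [sub_zero, abs_of_pos h0]
    · intro t ht
      rw [uIoc_of_le h0.le] at ht
      have := E4 t ⟨ht.1.le, ht.2⟩
      rw [Real.norm_eq_abs]
      calc |G (t, q) - (G (h/2, q) + (t - h/2) * G₁ (h/2, q))|
          = ‖G (t, q) - G (h/2, q) - (t - h/2) • G₁ (h/2, q)‖ := by
            rw [Real.norm_eq_abs, smul_eq_mul]; ring_nf
        _ ≤ Kg * h^2 / 8 := this
  -- rewrite the integrand
  have hc1' : ∀ t : ℝ, HasDerivAt (fun s => φ s q) (Φ₁ (t, q)) t := hc1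
  have hin : (fun t => α (φ t q) ⬝ᵥ deriv (fun s => φ s q) t - H (φ t q))
      = fun t => G (t, q) := by
    funext t
    rw [(hc1' t).deriv]
  rw [hin]
  -- rewrite the discrete Lagrangian
  have hLHS : h * (α m ⬝ᵥ (((1:ℝ)/h) • (φ h q - q)) - H m)
      = α m ⬝ᵥ (φ h q - q) - h * H m := by
    rw [dotProduct_smul, smul_eq_mul]
    field_simp
  rw [hLHS]
  -- memberships in V
  have hqV : ‖q‖ ≤ R := by have := bR 0 h0mem; rwa [hΦ0q] at this
  have hφhV : ‖φ h q‖ ≤ R := by have := bR h hhmem; rwa [hΦhq] at this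
  have hmV : m ∈ V := by
    have hnm : ‖m‖ ≤ R := by
      rw [hmdef]
      calc ‖((1:ℝ)/2) • (q + φ h q)‖ = (1/2) * ‖q + φ h q‖ := by
            rw [norm_smul, Real.norm_eq_abs, abs_of_nonneg (by norm_num : (0:ℝ) ≤ 1/2)]
        _ ≤ (1/2) * (‖q‖ + ‖φ h q‖) := by
            have := norm_add_le q (φ h q)
            nlinarith
        _ ≤ R := by linarith
    simpa [hVdef, mem_closedBall_zero_iff] using hnm
  have hμV : μ ∈ V := by
    have := bR (h/2) hh2mem
    rw [← hμdef] at this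
    simpa [hVdef, mem_closedBall_zero_iff] using this
  -- Lipschitz estimates
  have hdiffα : ∀ x ∈ V, DifferentiableAt ℝ α x :=
    fun x _ => (hα.differentiable (by simp)).differentiableAt
  have hdiffH : ∀ x ∈ V, DifferentiableAt ℝ H x :=
    fun x _ => (hH.differentiable (by simp)).differentiableAt
  have hLipα : ‖α m - α μ‖ ≤ Lα * ‖m - μ‖ :=
    Convex.norm_image_sub_le_of_norm_fderiv_le hdiffα
      (fun x hx => le_trans (hLα₀ x hx) (le_max_left _ _)) hVconv hμV hmV
  have hLipH : ‖H m - H μ‖ ≤ LH * ‖m - μ‖ :=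
    Convex.norm_image_sub_le_of_norm_fderiv_le hdiffH
      (fun x hx => le_trans (hLH₀ x hx) (le_max_left _ _)) hVconv hμV hmV
  have hMαμ : ‖α μ‖ ≤ Mα := le_trans (hMα₀ μ hμV) (le_max_left _ _)
  -- decomposition of the first error term
  have hdecomp : α m ⬝ᵥ (φ h q - q) - h * H m - h * G (h/2, q)
      = (α m - α μ) ⬝ᵥ (φ h q - q) + α μ ⬝ᵥ ((φ h q - q) - h • w)
        - h * (H m - H μ) := by
    have hg2 : G (h/2, q) = α μ ⬝ᵥ w - H μ := rfl
    rw [hg2]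
    simp only [sub_dotProduct, dotProduct_sub, dotProduct_smul, smul_eq_mul]
    ring
  have t1 : |(α m - α μ) ⬝ᵥ (φ h q - q)| ≤ n * ((Lα * (K2 * h^2 / 8)) * (K1 * h)) := by
    calc |(α m - α μ) ⬝ᵥ (φ h q - q)| ≤ n * (‖α m - α μ‖ * ‖φ h q - q‖) :=
          myDot_bound _ _
      _ ≤ n * ((Lα * (K2 * h^2 / 8)) * (K1 * h)) := by
          have hα1 : ‖α m - α μ‖ ≤ Lα * (K2 * h^2 / 8) :=
            le_trans hLipα (by nlinarith)
          have hnn : (0:ℝ) ≤ ‖φ h q - q‖ := norm_nonneg _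
          have hnn2 : (0:ℝ) ≤ ‖α m - α μ‖ := norm_nonneg _
          have := mul_le_mul hα1 E1 hnn (by positivity)
          nlinarith [Nat.cast_nonneg (α := ℝ) n]
  have t2 : |α μ ⬝ᵥ ((φ h q - q) - h • w)| ≤ n * (Mα * (K3 * h^3 / 24)) := by
    calc |α μ ⬝ᵥ ((φ h q - q) - h • w)| ≤ n * (‖α μ‖ * ‖(φ h q - q) - h • w‖) :=
          myDot_bound _ _
      _ ≤ n * (Mα * (K3 * h^3 / 24)) := by
          have := mul_le_mul hMαμ E3 (norm_nonneg _) hMα0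
          nlinarith [Nat.cast_nonneg (α := ℝ) n]
  have t3 : |h * (H m - H μ)| ≤ h * (LH * (K2 * h^2 / 8)) := by
    rw [abs_mul, abs_of_pos h0]
    have : |H m - H μ| ≤ LH * (K2 * h^2 / 8) := by
      have := le_trans hLipH (by nlinarith : LH * ‖m - μ‖ ≤ LH * (K2 * h^2 / 8))
      simpa [Real.norm_eq_abs] using this
    nlinarith
  have TA : |α m ⬝ᵥ (φ h q - q) - h * H m - h * G (h/2, q)|
      ≤ n * ((Lα * (K2 * h^2 / 8)) * (K1 * h)) + n * (Mα * (K3 * h^3 / 24))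
        + h * (LH * (K2 * h^2 / 8)) := by
    rw [hdecomp]
    set X := (α m - α μ) ⬝ᵥ (φ h q - q) with hX
    set Y := α μ ⬝ᵥ ((φ h q - q) - h • w) with hY
    set Z := h * (H m - H μ) with hZ
    calc |X + Y - Z| ≤ |X + Y| + |-Z| := by
          rw [sub_eq_add_neg]; exact abs_add_le _ _
      _ ≤ (|X| + |Y|) + |Z| := by rw [abs_neg]; exact add_le_add (abs_add_le _ _) le_rfl
      _ ≤ _ := by
          have := add_le_add (add_le_add t1 t2) t3
          linarith
  -- final combination
  calc |α m ⬝ᵥ (φ h q - q) - h * H m - ∫ t in (0:ℝ)..h, G (t, q)|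
      ≤ |α m ⬝ᵥ (φ h q - q) - h * H m - h * G (h/2, q)|
        + |(∫ t in (0:ℝ)..h, G (t, q)) - h * G (h/2, q)| := by
        have habc := abs_sub_le (α m ⬝ᵥ (φ h q - q) - h * H m) (h * G (h/2, q))
          (∫ t in (0:ℝ)..h, G (t, q))
        rw [abs_sub_comm (h * G (h/2, q)) (∫ t in (0:ℝ)..h, G (t, q))] at habc
        exact habc
    _ ≤ (n * ((Lα * (K2 * h^2 / 8)) * (K1 * h)) + n * (Mα * (K3 * h^3 / 24))
          + h * (LH * (K2 * h^2 / 8))) + Kg * h^2 / 8 * h := add_le_add TA E5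
    _ ≤ C * h^3 := by
        rw [hCdef]
        have hn0 : (0:ℝ) ≤ (n:ℝ) := Nat.cast_nonneg n
        nlinarith [pow_pos h0 3, sq_nonneg h, mul_nonneg hLα0 (mul_nonneg hK20 hK10),
          mul_nonneg hMα0 hK30, mul_nonneg hLH0 hK20]
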